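/- arXiv:2403.19341 — 2 statements merged into one kernel-verified Lean document; each statement's English description precedes it below -/
import Mathlib

section
/- (Exponential Giraud's Lemma, variant with mismatched exponential rates.) Fix reals p ≥ 0 and ρ > −n with 2p − ρ ≤ 0, fix ε ∈ (0,1) and 0 < τ < R. Then there exist α₀ ≥ 1 and C > 0 (depending only on the data above and on (M,d,μ), not on α, X, Y) such that for every α ≥ α₀ the following holds. Let X, Y : M×M → ℝ be continuous off the diagonal, with X(x,·) supported in B(x,τ) for every x, and satisfying for all x ≠ y: |X(x,y)| ≤ 1 if √α·d(x,y) ≤ 1, and |X(x,y)| ≤ α^{p}·d(x,y)^{ρ}·e^{−√α·d(x,y)} if √α·d(x,y) ≥ 1; |Y(x,y)| ≤ 1 if √α·d(x,y) ≤ 1, |Y(x,y)| ≤ e^{−(1−ε)·√α·d(x,y)} if √α·d(x,y) ≥ 1 and d(x,y) ≤ R, and |Y(x,y)| ≤ e^{−(1−ε)·√α·R} if d(x,y) ≥ R. Then Z(x,y) := ∫_M X(x,z)·Y(z,y) dμ(z) satisfies, for all x, y ∈ M: |Z(x,y)| ≤ C·α^{−n/2} if √α·d(x,y) ≤ 1;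 |Z(x,y)| ≤ C·α^{−n/2}·e^{−(1−ε)·√α·d(x,y)} if √α·d(x,y) ≥ 1 and d(x,y) ≤ R; and |Z(x,y)| ≤ C·α^{−n/2}·e^{−(1−ε)·√α·R} if d(x,y) ≥ R. -/
open MeasureTheory Real
noncomputable section

private lemma giraud_pow_le_exp {x : ℝ} (hx : 0 ≤ x) (m : ℕ) :
    x ^ m ≤ (m.factorial : ℝ) * Real.exp x := by
  have h := Real.sum_le_exp_of_nonneg hx (m + 1)
  have h2 : x ^ m / (m.factorial : ℝ) ≤ ∑ i ∈ Finset.range (m + 1), x ^ i / i.factorial :=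
    Finset.single_le_sum (f := fun i => x ^ i / (i.factorial : ℝ))
      (fun i _ => by positivity) (Finset.self_mem_range_succ m)
  have hf : (0 : ℝ) < m.factorial := by exact_mod_cast m.factorial_pos
  calc x ^ m = x ^ m / (m.factorial : ℝ) * m.factorial := by field_simp
    _ ≤ Real.exp x * m.factorial :=
        mul_le_mul_of_nonneg_right (h2.trans h) hf.le
    _ = (m.factorial : ℝ) * Real.exp x := mul_comm _ _

private lemma giraud_summable (n : ℕ) {c : ℝ} (hc : 0 < c) :
    Summable (fun k : ℕ => ((k : ℝ) + 1) ^ n * Real.exp (-c) ^ k) := by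
  have hr1 : Real.exp (-c) < 1 := Real.exp_lt_one_iff.2 (by linarith)
  have h0 : Summable (fun k : ℕ => (k : ℝ) ^ n * Real.exp (-c) ^ k) :=
    summable_pow_mul_geometric_of_norm_lt_one n
      (by rwa [Real.norm_eq_abs, abs_of_pos (Real.exp_pos _)])
  have h1 := (h0.comp_injective Nat.succ_injective).mul_right (Real.exp (-c))⁻¹
  refine h1.congr fun k => ?_
  have he : Real.exp (-c) ≠ 0 := (Real.exp_pos _).ne'
  simp only [Function.comp, Nat.cast_succ, pow_succ]
  field_simp

set_option maxHeartbeats 1000000 in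
/-- The key integral estimate: the integral of `exp(-c √α d(x,z))` is `O(α^{-n/2})`. -/
private lemma giraud_intbound {M : Type*} [MetricSpace M] [MeasurableSpace M] [BorelSpace M]
    (μ : Measure M) (n : ℕ) (A : ℝ) (hA : 0 ≤ A)
    (hvol : ∀ (x : M) (r : ℝ), 0 < r → μ (Metric.ball x r) ≤ ENNReal.ofReal (A * r ^ n))
    {c : ℝ} (hc : 0 < c) {α : ℝ} (hα : 1 ≤ α) (x : M) :
    ∫⁻ z, ENNReal.ofReal (Real.exp (-(c * (Real.sqrt α * dist x z)))) ∂μ ≤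
      ENNReal.ofReal (A * (∑' k : ℕ, ((k : ℝ) + 1) ^ n * Real.exp (-c) ^ k)
        * α ^ (-(n : ℝ) / 2)) := by
  have hα0 : (0 : ℝ) < α := lt_of_lt_of_le one_pos hα
  have hs0 : 0 < Real.sqrt α := Real.sqrt_pos.2 hα0
  have hsum := giraud_summable n hc
  have hαp : (0 : ℝ) < α ^ (-(n : ℝ) / 2) := Real.rpow_pos_of_pos hα0 _
  -- the inverse-power identity
  have hinv : ((Real.sqrt α : ℝ) ^ n)⁻¹ = α ^ (-(n : ℝ) / 2) := by
    have h1 : (Real.sqrt α) ^ n = α ^ ((n : ℝ) / 2) := by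
      rw [Real.sqrt_eq_rpow, ← Real.rpow_natCast (α ^ (1/2 : ℝ)) n,
        ← Real.rpow_mul hα0.le]
      congr 1; ring
    rw [h1, ← Real.rpow_neg hα0.le]
    congr 1; ring
  -- pointwise domination by a sum of indicators
  have key : ∀ z : M, ENNReal.ofReal (Real.exp (-(c * (Real.sqrt α * dist x z)))) ≤
      ∑' k : ℕ, (Metric.ball x (((k : ℝ) + 1) / Real.sqrt α)).indicator
        (fun _ => ENNReal.ofReal (Real.exp (-c) ^ k)) z := by
    intro z
    set t := Real.sqrt α * dist x z with ht
    have ht0 : 0 ≤ t := mul_nonneg hs0.le dist_nonneg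
    refine le_trans ?_ (ENNReal.le_tsum ⌊t⌋₊)
    have hz : z ∈ Metric.ball x (((⌊t⌋₊ : ℝ) + 1) / Real.sqrt α) := by
      rw [Metric.mem_ball, dist_comm, lt_div_iff₀ hs0]
      have h1 := Nat.lt_floor_add_one t
      calc dist x z * Real.sqrt α = t := by rw [ht]; ring
        _ < (⌊t⌋₊ : ℝ) + 1 := h1
    rw [Set.indicator_of_mem hz]
    apply ENNReal.ofReal_le_ofReal
    rw [← Real.exp_nat_mul]
    apply Real.exp_le_exp.2
    have h2 : (⌊t⌋₊ : ℝ) ≤ t := Nat.floor_le ht0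
    nlinarith
  have hmeas : ∀ k : ℕ, AEMeasurable
      ((Metric.ball x (((k : ℝ) + 1) / Real.sqrt α)).indicator
        (fun _ => ENNReal.ofReal (Real.exp (-c) ^ k))) μ :=
    fun k => (measurable_const.indicator Metric.isOpen_ball.measurableSet).aemeasurable
  have hterm : ∀ k : ℕ,
      (∫⁻ z, (Metric.ball x (((k : ℝ) + 1) / Real.sqrt α)).indicator
        (fun _ => ENNReal.ofReal (Real.exp (-c) ^ k)) z ∂μ) ≤
      ENNReal.ofReal ((A * α ^ (-(n : ℝ) / 2)) * (((k : ℝ) + 1) ^ n * Real.exp (-c) ^ k)) := by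
    intro k
    rw [lintegral_indicator_const Metric.isOpen_ball.measurableSet]
    have hrad : 0 < ((k : ℝ) + 1) / Real.sqrt α := by positivity
    calc ENNReal.ofReal (Real.exp (-c) ^ k) * μ (Metric.ball x (((k : ℝ) + 1) / Real.sqrt α))
        ≤ ENNReal.ofReal (Real.exp (-c) ^ k) *
            ENNReal.ofReal (A * (((k : ℝ) + 1) / Real.sqrt α) ^ n) :=
          mul_le_mul_right (hvol x _ hrad) _
      _ = ENNReal.ofReal (Real.exp (-c) ^ k * (A * (((k : ℝ) + 1) / Real.sqrt α) ^ n)) :=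
          (ENNReal.ofReal_mul (by positivity)).symm
      _ = ENNReal.ofReal ((A * α ^ (-(n : ℝ) / 2)) * (((k : ℝ) + 1) ^ n * Real.exp (-c) ^ k)) := by
          congr 1
          rw [div_pow, div_eq_mul_inv, hinv]
          ring
  calc ∫⁻ z, ENNReal.ofReal (Real.exp (-(c * (Real.sqrt α * dist x z)))) ∂μ
      ≤ ∫⁻ z, ∑' k : ℕ, (Metric.ball x (((k : ℝ) + 1) / Real.sqrt α)).indicator
          (fun _ => ENNReal.ofReal (Real.exp (-c) ^ k)) z ∂μ := lintegral_mono key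
    _ = ∑' k : ℕ, ∫⁻ z, (Metric.ball x (((k : ℝ) + 1) / Real.sqrt α)).indicator
          (fun _ => ENNReal.ofReal (Real.exp (-c) ^ k)) z ∂μ := lintegral_tsum hmeas
    _ ≤ ∑' k : ℕ, ENNReal.ofReal
          ((A * α ^ (-(n : ℝ) / 2)) * (((k : ℝ) + 1) ^ n * Real.exp (-c) ^ k)) :=
        ENNReal.tsum_le_tsum hterm
    _ = ENNReal.ofReal (∑' k : ℕ,
          (A * α ^ (-(n : ℝ) / 2)) * (((k : ℝ) + 1) ^ n * Real.exp (-c) ^ k)) :=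
        (ENNReal.ofReal_tsum_of_nonneg
          (fun k => mul_nonneg (mul_nonneg hA hαp.le) (by positivity))
          (hsum.mul_left _)).symm
    _ = ENNReal.ofReal (A * (∑' k : ℕ, ((k : ℝ) + 1) ^ n * Real.exp (-c) ^ k)
        * α ^ (-(n : ℝ) / 2)) := by
        rw [tsum_mul_left]
        congr 1
        ring

set_option maxHeartbeats 2000000 in
/-- exponential Giraud's Lemma, variant with mismatched exponential rates. -/
theorem statement12 (M : Type*) [MetricSpace M] [CompactSpace M]
    [MeasurableSpace M] [BorelSpace M] (μ : Measure M)
    (n : ℕ) (hn : 1 ≤ n) (A : ℝ) (hA : 0 < A)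
    (hvol : ∀ (x : M) (r : ℝ), 0 < r → μ (Metric.ball x r) ≤ ENNReal.ofReal (A * r ^ n))
    (p ρ : ℝ) (hp : 0 ≤ p) (hρ : -(n : ℝ) < ρ) (hpρ : 2 * p - ρ ≤ 0)
    (ε : ℝ) (hε : ε ∈ Set.Ioo (0 : ℝ) 1) (τ R : ℝ) (hτ : 0 < τ) (hτR : τ < R) :
    ∃ α₀ ≥ (1 : ℝ), ∃ C > 0, ∀ α : ℝ, α₀ ≤ α →
      ∀ X Y : M → M → ℝ,
        ContinuousOn (fun pr : M × M => X pr.1 pr.2) {pr : M × M | pr.1 ≠ pr.2} →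
        ContinuousOn (fun pr : M × M => Y pr.1 pr.2) {pr : M × M | pr.1 ≠ pr.2} →
        (∀ x z : M, τ ≤ dist x z → X x z = 0) →
        (∀ x y : M, x ≠ y → Real.sqrt α * dist x y ≤ 1 → |X x y| ≤ 1) →
        (∀ x y : M, 1 ≤ Real.sqrt α * dist x y →
          |X x y| ≤ α ^ p * dist x y ^ ρ * Real.exp (-(Real.sqrt α * dist x y))) →
        (∀ x y : M, x ≠ y → Real.sqrt α * dist x y ≤ 1 → |Y x y| ≤ 1) →
        (∀ x y : M, 1 ≤ Real.sqrt α * dist x y → dist x y ≤ R →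
          |Y x y| ≤ Real.exp (-(1 - ε) * (Real.sqrt α * dist x y))) →
        (∀ x y : M, R ≤ dist x y → |Y x y| ≤ Real.exp (-(1 - ε) * (Real.sqrt α * R))) →
        ∀ x y : M,
          (Real.sqrt α * dist x y ≤ 1 →
            |∫ z, X x z * Y z y ∂μ| ≤ C * α ^ (-(n : ℝ) / 2)) ∧
          (1 ≤ Real.sqrt α * dist x y → dist x y ≤ R →
            |∫ z, X x z * Y z y ∂μ| ≤
              C * α ^ (-(n : ℝ) / 2) * Real.exp (-(1 - ε) * (Real.sqrt α * dist x y))) ∧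
          (R ≤ dist x y →
            |∫ z, X x z * Y z y ∂μ| ≤
              C * α ^ (-(n : ℝ) / 2) * Real.exp (-(1 - ε) * (Real.sqrt α * R))) := by
  obtain ⟨hε0, hε1⟩ := hε
  set c : ℝ := ε / 2 with hcdef
  have hc0 : 0 < c := by simp only [hcdef]; linarith
  have hc1 : c ≤ 1 := by simp only [hcdef]; linarith
  set S : ℝ := ∑' k : ℕ, ((k : ℝ) + 1) ^ n * Real.exp (-c) ^ k with hSdef
  have hsum := giraud_summable n hc0
  have hS1 : (1 : ℝ) ≤ S := by
    have h0 : ((0 : ℕ) : ℝ) + 1 = 1 := by norm_num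
    have := Summable.le_tsum hsum 0 (fun j _ => by positivity)
    simpa using this
  have hS0 : 0 < S := lt_of_lt_of_le one_pos hS1
  set m : ℕ := ⌈ρ⌉₊ with hmdef
  set F : ℝ := (m.factorial : ℝ) * (2 / ε) ^ m with hFdef
  have hF1 : (1 : ℝ) ≤ F := by
    have h1 : (1 : ℝ) ≤ (m.factorial : ℝ) := by exact_mod_cast m.factorial_pos
    have h2 : (1 : ℝ) ≤ (2 / ε) ^ m :=
      one_le_pow₀ (by rw [le_div_iff₀ hε0]; linarith)
    calc (1 : ℝ) = 1 * 1 := by norm_num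
      _ ≤ (m.factorial : ℝ) * (2 / ε) ^ m := mul_le_mul h1 h2 one_pos.le (by linarith)
  have hF0 : 0 < F := lt_of_lt_of_le one_pos hF1
  set K : ℝ := Real.exp 2 * F with hKdef
  have hK0 : 0 < K := mul_pos (Real.exp_pos 2) hF0
  refine ⟨1, le_refl 1, Real.exp 1 * K * (A * S), by positivity, ?_⟩
  intro α hα X Y _hXc _hYc _hXsupp hX1 hX2 hY1 hY2 hY3 x y
  have hα0 : (0 : ℝ) < α := lt_of_lt_of_le one_pos hα
  have hs0 : 0 < Real.sqrt α := Real.sqrt_pos.2 hα0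
  have hαp : (0 : ℝ) < α ^ (-(n : ℝ) / 2) := Real.rpow_pos_of_pos hα0 _
  have hR0 : 0 < R := lt_trans hτ hτR
  -- singletons are null
  have hpt : ∀ w : M, μ {w} = 0 := by
    intro w
    have hten : Filter.Tendsto (fun s : ℝ => ENNReal.ofReal (A * s ^ n))
        (nhdsWithin 0 (Set.Ioi 0)) (nhds 0) := by
      have h1 : Filter.Tendsto (fun s : ℝ => A * s ^ n) (nhds 0) (nhds 0) := by
        have := ((continuous_const (y := A)).mul (continuous_pow n)).tendsto (0 : ℝ)
        simpa [Pi.mul_def, zero_pow (Nat.one_le_iff_ne_zero.1 hn)] using this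
      have h2 : Filter.Tendsto ENNReal.ofReal (nhds (0 : ℝ)) (nhds (ENNReal.ofReal 0)) :=
        ENNReal.continuous_ofReal.tendsto 0
      have h3 : Filter.Tendsto (fun s : ℝ => ENNReal.ofReal (A * s ^ n))
          (nhdsWithin 0 (Set.Ioi 0)) (nhds (ENNReal.ofReal 0)) :=
        h2.comp (h1.mono_left nhdsWithin_le_nhds)
      simpa using h3
    refine le_antisymm ?_ zero_le
    have hev : ∀ᶠ s in nhdsWithin (0 : ℝ) (Set.Ioi 0),
        μ {w} ≤ ENNReal.ofReal (A * s ^ n) := by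
      filter_upwards [self_mem_nhdsWithin] with s hs
      exact le_trans (measure_mono (Set.singleton_subset_iff.2 (Metric.mem_ball_self hs)))
        (hvol w s hs)
    exact ge_of_tendsto hten hev
  have hae : ∀ᵐ z ∂μ, z ≠ x ∧ z ≠ y := by
    have hxy0 : μ ({x} ∪ {y} : Set M) = 0 := measure_union_null (hpt x) (hpt y)
    have hsub : μ {z : M | ¬(z ≠ x ∧ z ≠ y)} = 0 := by
      refine measure_mono_null ?_ hxy0
      intro z hz
      simp only [Set.mem_setOf_eq, not_and, not_not, ne_eq] at hz
      by_cases h : z = x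
      · exact Set.mem_union_left _ (by simp [h])
      · exact Set.mem_union_right _ (by simp [hz h])
    exact ae_iff.2 hsub
  -- pointwise bound on X
  have hXb : ∀ z : M, z ≠ x →
      |X x z| ≤ K * (Real.exp (-(1 - ε) * (Real.sqrt α * dist x z)) *
        Real.exp (-(c * (Real.sqrt α * dist x z)))) := by
    intro z hz
    set t := Real.sqrt α * dist x z with htdef
    have ht0 : 0 ≤ t := mul_nonneg hs0.le dist_nonneg
    rcases le_total t 1 with hle | hge
    · -- near regime
      have h1 : |X x z| ≤ 1 := hX1 x z (Ne.symm hz) hle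
      refine h1.trans ?_
      have e1 : Real.exp (-1 : ℝ) ≤ Real.exp (-(1 - ε) * t) := by
        apply Real.exp_le_exp.2
        nlinarith
      have e2 : Real.exp (-1 : ℝ) ≤ Real.exp (-(c * t)) := by
        apply Real.exp_le_exp.2
        nlinarith
      have hKe : Real.exp 2 ≤ K := by
        calc Real.exp 2 = Real.exp 2 * 1 := (mul_one _).symm
          _ ≤ Real.exp 2 * F := by nlinarith [Real.exp_pos 2]
      calc (1 : ℝ) = Real.exp 2 * (Real.exp (-1 : ℝ) * Real.exp (-1 : ℝ)) := by
            rw [← Real.exp_add, ← Real.exp_add]; norm_num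
        _ ≤ K * (Real.exp (-(1 - ε) * t) * Real.exp (-(c * t))) := by
            apply mul_le_mul hKe
            · exact mul_le_mul e1 e2 (Real.exp_pos _).le (Real.exp_pos _).le
            · positivity
            · exact hK0.le
    · -- far regime
      have h1 : |X x z| ≤ α ^ p * dist x z ^ ρ * Real.exp (-(Real.sqrt α * dist x z)) :=
        hX2 x z hge
      refine h1.trans ?_
      -- step 1 : α^p * d^ρ ≤ t^ρ
      have htpos : (0 : ℝ) < t := lt_of_lt_of_le one_pos hge
      have hd0 : 0 < dist x z := by
        by_contra hcon
        push_neg at hcon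
        have : dist x z = 0 := le_antisymm hcon dist_nonneg
        rw [htdef, this, mul_zero] at htpos
        exact lt_irrefl 0 htpos
      have hmulr : t ^ ρ = α ^ (ρ / 2) * dist x z ^ ρ := by
        rw [htdef, Real.mul_rpow hs0.le dist_nonneg]
        congr 1
        rw [Real.sqrt_eq_rpow, ← Real.rpow_mul hα0.le]
        congr 1; ring
      have hstep1 : α ^ p * dist x z ^ ρ ≤ t ^ ρ := by
        have hkey : α ^ p * dist x z ^ ρ = α ^ (p - ρ / 2) * t ^ ρ := by
          rw [hmulr, ← mul_assoc, ← Real.rpow_add hα0]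
          congr 2; ring
        rw [hkey]
        have hle1 : α ^ (p - ρ / 2) ≤ 1 :=
          Real.rpow_le_one_of_one_le_of_nonpos hα (by linarith)
        have htρ : 0 ≤ t ^ ρ := Real.rpow_nonneg htpos.le _
        nlinarith
      -- step 2 : t^ρ ≤ F * exp (c * t)
      have hstep2 : t ^ ρ ≤ F * Real.exp (c * t) := by
        have h2a : t ^ ρ ≤ t ^ (m : ℝ) :=
          Real.rpow_le_rpow_of_exponent_le hge (Nat.le_ceil ρ)
        have h2b : t ^ (m : ℝ) = t ^ m := Real.rpow_natCast t m
        have h2c : (c * t) ^ m ≤ (m.factorial : ℝ) * Real.exp (c * t) :=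
          giraud_pow_le_exp (by positivity) m
        have h2d : t ^ m = (c * t) ^ m * (2 / ε) ^ m := by
          rw [← mul_pow]
          congr 1
          rw [hcdef]
          field_simp
        calc t ^ ρ ≤ t ^ m := by rw [← h2b]; exact h2a
          _ = (c * t) ^ m * (2 / ε) ^ m := h2d
          _ ≤ (m.factorial : ℝ) * Real.exp (c * t) * (2 / ε) ^ m := by
              apply mul_le_mul_of_nonneg_right h2c
              positivity
          _ = F * Real.exp (c * t) := by rw [hFdef]; ring
      -- combine
      calc α ^ p * dist x z ^ ρ * Real.exp (-(Real.sqrt α * dist x z))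
          ≤ F * Real.exp (c * t) * Real.exp (-t) := by
            rw [← htdef]
            apply mul_le_mul_of_nonneg_right (hstep1.trans hstep2) (Real.exp_pos _).le
        _ = F * Real.exp (c * t - t) := by rw [mul_assoc, ← Real.exp_add]; ring_nf
        _ ≤ K * (Real.exp (-(1 - ε) * t) * Real.exp (-(c * t))) := by
            rw [← Real.exp_add]
            have hexp : c * t - t = -(1 - ε) * t + -(c * t) := by rw [hcdef]; ring
            rw [hexp, hKdef]
            have hpos : (0 : ℝ) < Real.exp (-(1 - ε) * t + -(c * t)) := Real.exp_pos _
            have h1e : (1 : ℝ) ≤ Real.exp 2 := Real.one_le_exp (by norm_num)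
            have hFK : F ≤ Real.exp 2 * F := by nlinarith
            exact mul_le_mul_of_nonneg_right hFK hpos.le
  -- pointwise bound on Y
  have hYb : ∀ z : M, z ≠ y →
      |Y z y| ≤ Real.exp 1 * Real.exp (-(1 - ε) * (Real.sqrt α * min (dist z y) R)) := by
    intro z hz
    have he1 : (1 : ℝ) ≤ Real.exp 1 := Real.one_le_exp one_pos.le
    rcases le_or_gt R (dist z y) with hcase | hcase
    · rw [min_eq_right hcase]
      calc |Y z y| ≤ Real.exp (-(1 - ε) * (Real.sqrt α * R)) := hY3 z y hcase
        _ ≤ Real.exp 1 * Real.exp (-(1 - ε) * (Real.sqrt α * R)) := by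
            nlinarith [Real.exp_pos (-(1 - ε) * (Real.sqrt α * R))]
    · rw [min_eq_left hcase.le]
      rcases le_total (Real.sqrt α * dist z y) 1 with hle | hge
      · have h1 : |Y z y| ≤ 1 := hY1 z y hz hle
        refine h1.trans ?_
        have h2 : Real.exp (-1 : ℝ) ≤ Real.exp (-(1 - ε) * (Real.sqrt α * dist z y)) := by
          apply Real.exp_le_exp.2
          have h3 : 0 ≤ Real.sqrt α * dist z y := mul_nonneg hs0.le dist_nonneg
          nlinarith
        calc (1 : ℝ) = Real.exp 1 * Real.exp (-1 : ℝ) := by rw [← Real.exp_add]; norm_num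
          _ ≤ Real.exp 1 * Real.exp (-(1 - ε) * (Real.sqrt α * dist z y)) := by
              nlinarith [Real.exp_pos (1 : ℝ)]
      · calc |Y z y| ≤ Real.exp (-(1 - ε) * (Real.sqrt α * dist z y)) := hY2 z y hge hcase.le
          _ ≤ Real.exp 1 * Real.exp (-(1 - ε) * (Real.sqrt α * dist z y)) := by
              nlinarith [Real.exp_pos (-(1 - ε) * (Real.sqrt α * dist z y))]
  -- combined pointwise bound
  set Eg : ℝ := Real.exp (-(1 - ε) * (Real.sqrt α * min (dist x y) R)) with hEgdef
  have hEg0 : 0 < Eg := Real.exp_pos _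
  have hcomb : ∀ z : M, z ≠ x → z ≠ y →
      ‖X x z * Y z y‖ ≤ (Real.exp 1 * K) * Eg *
        Real.exp (-(c * (Real.sqrt α * dist x z))) := by
    intro z hzx hzy
    rw [Real.norm_eq_abs, abs_mul]
    set a := Real.sqrt α * dist x z with hadef
    set b := Real.sqrt α * min (dist z y) R with hbdef
    set g := Real.sqrt α * min (dist x y) R with hgdef
    have hg : g ≤ a + b := by
      have hmin : min (dist x y) R ≤ dist x z + min (dist z y) R := by
        rcases le_total (dist z y) R with h | h
        · rw [min_eq_left h]
          calc min (dist x y) R ≤ dist x y := min_le_left _ _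
            _ ≤ dist x z + dist z y := dist_triangle x z y
        · rw [min_eq_right h]
          calc min (dist x y) R ≤ R := min_le_right _ _
            _ ≤ dist x z + R := le_add_of_nonneg_left dist_nonneg
      calc g = Real.sqrt α * min (dist x y) R := hgdef
        _ ≤ Real.sqrt α * (dist x z + min (dist z y) R) :=
            mul_le_mul_of_nonneg_left hmin hs0.le
        _ = a + b := by rw [hadef, hbdef]; ring
    have hmono : Real.exp (-(1 - ε) * a) * Real.exp (-(1 - ε) * b) ≤
        Real.exp (-(1 - ε) * g) := by
      rw [← Real.exp_add]
      apply Real.exp_le_exp.2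
      nlinarith
    calc |X x z| * |Y z y|
        ≤ (K * (Real.exp (-(1 - ε) * a) * Real.exp (-(c * a)))) *
          (Real.exp 1 * Real.exp (-(1 - ε) * b)) :=
          mul_le_mul (hXb z hzx) (hYb z hzy) (abs_nonneg _) (by positivity)
      _ = (Real.exp 1 * K) * (Real.exp (-(1 - ε) * a) * Real.exp (-(1 - ε) * b)) *
          Real.exp (-(c * a)) := by ring
      _ ≤ (Real.exp 1 * K) * Real.exp (-(1 - ε) * g) * Real.exp (-(c * a)) := by
          apply mul_le_mul_of_nonneg_right _ (Real.exp_pos _).le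
          exact mul_le_mul_of_nonneg_left hmono (by positivity)
      _ = (Real.exp 1 * K) * Eg * Real.exp (-(c * (Real.sqrt α * dist x z))) := by
          rw [hEgdef, hgdef, hadef]
  -- the main estimate
  have hmain : |∫ z, X x z * Y z y ∂μ| ≤
      Real.exp 1 * K * (A * S) * α ^ (-(n : ℝ) / 2) * Eg := by
    have h1 : |∫ z, X x z * Y z y ∂μ| ≤
        (∫⁻ z, ENNReal.ofReal ‖X x z * Y z y‖ ∂μ).toReal := by
      rw [← Real.norm_eq_abs]
      exact norm_integral_le_lintegral_norm _
    have h2 : ∫⁻ z, ENNReal.ofReal ‖X x z * Y z y‖ ∂μ ≤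
        ENNReal.ofReal (Real.exp 1 * K * (A * S) * α ^ (-(n : ℝ) / 2) * Eg) := by
      calc ∫⁻ z, ENNReal.ofReal ‖X x z * Y z y‖ ∂μ
          ≤ ∫⁻ z, ENNReal.ofReal ((Real.exp 1 * K) * Eg *
              Real.exp (-(c * (Real.sqrt α * dist x z)))) ∂μ := by
            apply lintegral_mono_ae
            filter_upwards [hae] with z hz
            exact ENNReal.ofReal_le_ofReal (hcomb z hz.1 hz.2)
        _ = ∫⁻ z, ENNReal.ofReal ((Real.exp 1 * K) * Eg) *
              ENNReal.ofReal (Real.exp (-(c * (Real.sqrt α * dist x z)))) ∂μ := by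
            congr 1
            funext z
            rw [← ENNReal.ofReal_mul (by positivity)]
        _ = ENNReal.ofReal ((Real.exp 1 * K) * Eg) *
              ∫⁻ z, ENNReal.ofReal (Real.exp (-(c * (Real.sqrt α * dist x z)))) ∂μ :=
            lintegral_const_mul' _ _ ENNReal.ofReal_ne_top
        _ ≤ ENNReal.ofReal ((Real.exp 1 * K) * Eg) *
              ENNReal.ofReal (A * S * α ^ (-(n : ℝ) / 2)) :=
            mul_le_mul_right (giraud_intbound μ n A hA.le hvol hc0 hα x) _
        _ = ENNReal.ofReal (Real.exp 1 * K * (A * S) * α ^ (-(n : ℝ) / 2) * Eg) := by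
            rw [← ENNReal.ofReal_mul (by positivity)]
            congr 1
            ring
    exact h1.trans (ENNReal.toReal_le_of_le_ofReal (by positivity) h2)
  -- conclude the three cases
  refine ⟨?_, ?_, ?_⟩
  · intro _h
    have hEg1 : Eg ≤ 1 := by
      rw [hEgdef]
      apply Real.exp_le_one_iff.2
      have hmin0 : 0 ≤ min (dist x y) R := le_min dist_nonneg hR0.le
      nlinarith [mul_nonneg hs0.le hmin0]
    calc |∫ z, X x z * Y z y ∂μ| ≤
        Real.exp 1 * K * (A * S) * α ^ (-(n : ℝ) / 2) * Eg := hmain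
      _ ≤ Real.exp 1 * K * (A * S) * α ^ (-(n : ℝ) / 2) * 1 := by
          apply mul_le_mul_of_nonneg_left hEg1
          positivity
      _ = Real.exp 1 * K * (A * S) * α ^ (-(n : ℝ) / 2) := mul_one _
  · intro _h1 h2
    have : Eg = Real.exp (-(1 - ε) * (Real.sqrt α * dist x y)) := by
      rw [hEgdef, min_eq_left h2]
    rw [← this]
    exact hmain
  · intro h1
    have : Eg = Real.exp (-(1 - ε) * (Real.sqrt α * R)) := by
      rw [hEgdef, min_eq_right h1]
    rw [← this]
    exact hmain
end
end

section
/- (Liouville-type vanishing.) Fix integers k ≥ 1 and n > 2k. Let f ∈ C^{2k}(ℝⁿ) satisfy (Δ+1)^k f = 0 pointwise on ℝⁿ, and suppose that for every p ≥ 1 there is C_p > 0 such that |∇^l f(y)| ≤ C_p·(1+|y|)^{−p} for all y ∈ ℝⁿ and all l = 0,…,2k. Then f ≡ 0 on ℝⁿ. -/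
open MeasureTheory Real
set_option maxSynthPendingDepth 3
noncomputable section

/-- ℝⁿ as `EuclideanSpace ℝ (Fin n)`. -/
abbrev Euc (n : ℕ) := EuclideanSpace ℝ (Fin n)

/-- The non-negative Euclidean Laplacian `Δf = -∑ ∂²f/∂x_i²`. -/
def lap (n : ℕ) (f : Euc n → ℝ) (x : Euc n) : ℝ :=
  -∑ i : Fin n,
    iteratedFDeriv ℝ 2 f x ![EuclideanSpace.single i (1 : ℝ), EuclideanSpace.single i (1 : ℝ)]

/-- The k-fold composition of `f ↦ Δf + αf`. -/
def lapPow (n : ℕ) (α : ℝ) (k : ℕ) : (Euc n → ℝ) → Euc n → ℝ :=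
  (fun f x => lap n f x + α * f x)^[k]

/-- `G` is a fundamental solution of `(Δ+α)^k` in ℝⁿ. -/
def IsFundSol (n k : ℕ) (α : ℝ) (G : Euc n → Euc n → ℝ) : Prop :=
  (∀ x, LocallyIntegrable (G x) volume) ∧
  ∀ φ : Euc n → ℝ, ContDiff ℝ (⊤ : ℕ∞) φ → HasCompactSupport φ →
    ∀ x, ∫ y, G x y * lapPow n α k φ y = φ x

/-- The modified Bessel function of the second kind `K_ν(r)`. -/
def besselK (ν r : ℝ) : ℝ :=
  ∫ t in Set.Ioi (0 : ℝ), Real.exp (-r * Real.cosh t) * Real.cosh (ν * t)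

/-- `G₁(x,y) = (2π)^{-n/2} |x-y|^{-(n-2)/2} K_{(n-2)/2}(|x-y|)`. -/
def G1 (n : ℕ) (x y : Euc n) : ℝ :=
  (2 * π) ^ (-(n : ℝ) / 2) * ‖x - y‖ ^ (-((n : ℝ) - 2) / 2) *
    besselK (((n : ℝ) - 2) / 2) ‖x - y‖

/-- The iterated convolutions `G₁^{(j)}`. -/
def G1iter (n : ℕ) : ℕ → Euc n → Euc n → ℝ
  | 0, _, _ => 0
  | 1, x, y => G1 n x y
  | j + 2, x, y => ∫ z, G1iter n (j + 1) x z * G1 n z y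

/-- `G_α^{(k)}(x,y) = α^{(n-2k)/2} G₁^{(k)}(√α x, √α y)`. -/
def Gak (n k : ℕ) (α : ℝ) (x y : Euc n) : ℝ :=
  α ^ (((n : ℝ) - 2 * k) / 2) * G1iter n k (Real.sqrt α • x) (Real.sqrt α • y)

/-- The class 𝔥ₖ. -/
def MemHk (n k : ℕ) (u : Euc n → Euc n → ℝ) : Prop :=
  ContDiffOn ℝ (2 * k : ℕ) (fun p : Euc n × Euc n => u p.1 p.2)
    {p : Euc n × Euc n | p.1 ≠ p.2} ∧
  (∃ C > 0, ∀ x y : Euc n, x ≠ y → ‖x - y‖ ≤ 1 →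
    |u x y| ≤ C * ‖x - y‖ ^ (2 * (k : ℝ) - n)) ∧
  ∀ p : ℝ, 1 ≤ p → ∃ C > 0, ∀ l ≤ 2 * k, ∀ x y : Euc n, 1 ≤ ‖x - y‖ →
    ‖iteratedFDeriv ℝ l (u x) y‖ ≤ C * ‖x - y‖ ^ (-p)

/-- The constant `c_{n,k}`. -/
def cnk (n k : ℕ) : ℝ :=
  Real.Gamma (((n : ℝ) - 2 * k) / 2) / (4 ^ k * π ^ ((n : ℝ) / 2) * (Nat.factorial (k - 1)))

/-- The modulus `η`. -/
def eta (n k : ℕ) (t : ℝ) : ℝ :=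
  if n = 2 * k + 1 then t
  else if n = 2 * k + 2 then t ^ 2 * (1 + |Real.log t|)
  else t ^ 2

/-- Evaluation of a bilinear-as-iterated CLM at (v,v). -/
def evCLM (n : ℕ) (v : Euc n) : (Euc n →L[ℝ] (Euc n →L[ℝ] ℝ)) →L[ℝ] ℝ :=
  (ContinuousLinearMap.apply ℝ ℝ v).comp (ContinuousLinearMap.apply ℝ (Euc n →L[ℝ] ℝ) v)

lemma evCLM_apply {n : ℕ} (v : Euc n) (B : Euc n →L[ℝ] (Euc n →L[ℝ] ℝ)) :
    evCLM n v B = B v v := rfl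

def lapCLM (n : ℕ) : (Euc n →L[ℝ] (Euc n →L[ℝ] ℝ)) →L[ℝ] ℝ :=
  -∑ i : Fin n, evCLM n (EuclideanSpace.single i (1 : ℝ))

lemma lapCLM_norm (n : ℕ) : ‖lapCLM n‖ ≤ n := by
  rw [lapCLM, norm_neg]
  refine le_trans (norm_sum_le _ _) ?_
  have : ∀ i : Fin n, ‖evCLM n (EuclideanSpace.single i (1 : ℝ))‖ ≤ 1 := by
    intro i
    refine ContinuousLinearMap.opNorm_le_bound _ zero_le_one (fun B => ?_)
    rw [evCLM_apply]
    set v := EuclideanSpace.single i (1 : ℝ)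
    have hv : ‖v‖ = 1 := by simp [v, EuclideanSpace.norm_single]
    calc ‖B v v‖ ≤ ‖B v‖ * ‖v‖ := (B v).le_opNorm v
      _ ≤ ‖B‖ * ‖v‖ * ‖v‖ :=
        mul_le_mul_of_nonneg_right (B.le_opNorm v) (norm_nonneg v)
      _ = 1 * ‖B‖ := by rw [hv]; ring
  calc ∑ i : Fin n, ‖evCLM n (EuclideanSpace.single i (1 : ℝ))‖ ≤ ∑ _i : Fin n, (1:ℝ) :=
        Finset.sum_le_sum (fun i _ => this i)
    _ = n := by simp

lemma lap_eq_clm {n : ℕ} (g : Euc n → ℝ) (x : Euc n) :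
    lap n g x = lapCLM n (fderiv ℝ (fderiv ℝ g) x) := by
  rw [lap, lapCLM]
  simp only [ContinuousLinearMap.neg_apply, ContinuousLinearMap.sum_apply, evCLM_apply]
  congr 1
  refine Finset.sum_congr rfl (fun i _ => ?_)
  rw [iteratedFDeriv_two_apply]
  simp

lemma fderiv2_contDiff {n m : ℕ} {g : Euc n → ℝ} (hg : ContDiff ℝ (m + 2 : ℕ) g) :
    ContDiff ℝ (m : ℕ) (fderiv ℝ (fderiv ℝ g)) := by
  have h1 : ContDiff ℝ (m + 1 : ℕ) (fderiv ℝ g) := by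
    apply hg.fderiv_right
    norm_cast
  apply h1.fderiv_right
  norm_cast

lemma lap_eq_comp {n : ℕ} (g : Euc n → ℝ) :
    lap n g = (lapCLM n) ∘ (fderiv ℝ (fderiv ℝ g)) := funext fun x => lap_eq_clm g x

lemma lap_contDiff {n m : ℕ} {g : Euc n → ℝ} (hg : ContDiff ℝ (m + 2 : ℕ) g) :
    ContDiff ℝ (m : ℕ) (lap n g) := by
  rw [lap_eq_comp]
  exact (lapCLM n).contDiff.comp (fderiv2_contDiff hg)

lemma lap_bound {n m : ℕ} {g : Euc n → ℝ} (hg : ContDiff ℝ (m + 2 : ℕ) g)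
    {l : ℕ} (hl : l ≤ m) (y : Euc n) :
    ‖iteratedFDeriv ℝ l (lap n g) y‖ ≤ n * ‖iteratedFDeriv ℝ (l + 2) g y‖ := by
  have h2 := fderiv2_contDiff hg
  rw [lap_eq_comp, (lapCLM n).iteratedFDeriv_comp_left (h2.contDiffAt (x := y)) (by exact_mod_cast hl)]
  refine le_trans ((lapCLM n).norm_compContinuousMultilinearMap_le _) ?_
  rw [norm_iteratedFDeriv_fderiv, norm_iteratedFDeriv_fderiv]
  exact mul_le_mul_of_nonneg_right (lapCLM_norm n) (norm_nonneg _)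

lemma second_test {φ : ℝ → ℝ} {c : ℝ} (hcont : Continuous φ)
    (hmax : ∀ t, φ t ≤ φ 0) (hd2 : HasDerivAt (deriv φ) c 0) : c ≤ 0 := by
  by_contra hc
  push_neg at hc
  have hloc : IsLocalMax φ 0 := Filter.Eventually.of_forall hmax
  have h0 : deriv φ 0 = 0 := hloc.deriv_eq_zero
  have hslope := hasDerivAt_iff_tendsto_slope.mp hd2
  have ev : ∀ᶠ t in nhdsWithin (0:ℝ) {(0:ℝ)}ᶜ, slope (deriv φ) 0 t ∈ Set.Ioi (0:ℝ) :=
    hslope (Ioi_mem_nhds hc)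
  have evp : ∀ᶠ t in nhdsWithin (0:ℝ) (Set.Ioi 0), slope (deriv φ) 0 t ∈ Set.Ioi (0:ℝ) :=
    ev.filter_mono (nhdsWithin_mono 0 (fun t ht => ne_of_gt ht))
  have evd : ∀ᶠ t in nhdsWithin (0:ℝ) (Set.Ioi 0), 0 < deriv φ t := by
    filter_upwards [evp, self_mem_nhdsWithin] with t hst ht
    rw [Set.mem_Ioi, slope_def_field, h0, sub_zero, sub_zero] at hst
    have : (0:ℝ) < t := ht
    have := mul_pos hst this
    rwa [div_mul_cancel₀ _ (ne_of_gt this ∘ fun h => by simp [h] at ht)] at this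
  obtain ⟨u, hu, hsub⟩ := mem_nhdsGT_iff_exists_Ioo_subset.mp evd
  have hu0 : (0:ℝ) < u := hu
  have hmono : StrictMonoOn φ (Set.Icc 0 u) := by
    refine strictMonoOn_of_deriv_pos (convex_Icc 0 u) hcont.continuousOn (fun t ht => ?_)
    rw [interior_Icc] at ht
    exact hsub ⟨ht.1, ht.2⟩
  have h1 : φ 0 < φ (u/2) :=
    hmono ⟨le_refl 0, le_of_lt hu0⟩ ⟨by positivity, by linarith⟩ (by positivity)
  exact absurd (hmax (u/2)) (not_le.mpr h1)

lemma dirSecond_nonpos {n : ℕ} {g : Euc n → ℝ} (hg : ContDiff ℝ 2 g)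
    {x : Euc n} (hmax : ∀ z, g z ≤ g x) (v : Euc n) :
    fderiv ℝ (fderiv ℝ g) x v v ≤ 0 := by
  set ρ : ℝ → Euc n := fun t => x + t • v with hρdef
  have hρ : ∀ t, HasDerivAt ρ v t := fun t => by
    have h := ((hasDerivAt_id t).smul_const v).const_add x; rwa [one_smul] at h
  have hρc : Continuous ρ := by
    exact continuous_const.add (continuous_id.smul continuous_const)
  have hx0 : ρ 0 = x := by simp [hρdef]
  have hg1 : Differentiable ℝ g := hg.differentiable (by norm_num)
  have hφd : ∀ t, HasDerivAt (g ∘ ρ) (fderiv ℝ g (ρ t) v) t := fun t =>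
    (hg1 (ρ t)).hasFDerivAt.comp_hasDerivAt t (hρ t)
  have hderiv : deriv (g ∘ ρ) = fun t => fderiv ℝ g (ρ t) v :=
    funext fun t => (hφd t).deriv
  have hg2 : ContDiff ℝ 1 (fderiv ℝ g) := hg.fderiv_right (by norm_num)
  have hf : HasFDerivAt (fderiv ℝ g) (fderiv ℝ (fderiv ℝ g) x) (ρ 0) :=
    hx0 ▸ (hg2.differentiable one_ne_zero x).hasFDerivAt
  have step : HasDerivAt (fun t => fderiv ℝ g (ρ t)) (fderiv ℝ (fderiv ℝ g) x v) 0 :=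
    hf.comp_hasDerivAt 0 (hρ 0)
  have step2 : HasDerivAt (fun t => fderiv ℝ g (ρ t) v) (fderiv ℝ (fderiv ℝ g) x v v) 0 := by
    have := (ContinuousLinearMap.apply ℝ ℝ v).hasFDerivAt.comp_hasDerivAt 0 step
    exact this
  have hd2 : HasDerivAt (deriv (g ∘ ρ)) (fderiv ℝ (fderiv ℝ g) x v v) 0 := by
    rw [hderiv]; exact step2
  refine second_test (hg.continuous.comp hρc) (fun t => ?_) hd2
  show g (ρ t) ≤ g (ρ 0)
  rw [hx0]; exact hmax (ρ t)

lemma lap_nonneg_at_max {n : ℕ} {g : Euc n → ℝ} (hg : ContDiff ℝ 2 g)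
    {x : Euc n} (hmax : ∀ z, g z ≤ g x) : 0 ≤ lap n g x := by
  rw [lap, neg_nonneg]
  refine Finset.sum_nonpos (fun i _ => ?_)
  rw [iteratedFDeriv_two_apply]
  simpa using dirSecond_nonpos hg hmax (EuclideanSpace.single i 1)

lemma lap_neg_fun {n : ℕ} (g : Euc n → ℝ) (y : Euc n) :
    lap n (fun z => -g z) y = - lap n g y := by
  have : (fun z => -g z) = -g := rfl
  rw [lap, lap, this]
  simp [iteratedFDeriv_neg_apply]

lemma no_pos {n : ℕ} {g : Euc n → ℝ} (hg : ContDiff ℝ 2 g)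
    (heq : ∀ y, lap n g y + g y = 0)
    (hdec : Filter.Tendsto g (Filter.cocompact (Euc n)) (nhds 0)) :
    ∀ y, g y ≤ 0 := by
  by_contra h
  push_neg at h
  obtain ⟨y, hy⟩ := h
  have hev : ∀ᶠ z in Filter.cocompact (Euc n), g z < g y := by
    filter_upwards [hdec (Metric.ball_mem_nhds (0:ℝ) hy)] with z hz
    have h1 : |g z - 0| < g y := by simpa [Real.dist_eq] using hz
    calc g z ≤ |g z| := le_abs_self _
      _ < g y := by simpa using h1
  obtain ⟨K, hK, hKs⟩ := Filter.mem_cocompact.mp hev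
  set S : Set (Euc n) := {z | g y ≤ g z} with hS
  have hSK : S ⊆ K := by
    intro z hz
    by_contra hzK
    have h2 : g y ≤ g z := hz
    exact absurd h2 (not_le.mpr (hKs hzK))
  have hSc : IsCompact S :=
    hK.of_isClosed_subset (isClosed_le continuous_const hg.continuous) hSK
  obtain ⟨x, hxS, hmaxS⟩ := hSc.exists_isMaxOn ⟨y, show g y ≤ g y from le_rfl⟩ hg.continuous.continuousOn
  have hgmax : ∀ z, g z ≤ g x := by
    intro z
    by_cases hz : z ∈ S
    · exact isMaxOn_iff.mp hmaxS z hz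
    · have hz' : ¬ (g y ≤ g z) := hz
      have : g z < g y := not_le.mp hz'
      exact le_of_lt (lt_of_lt_of_le this hxS)
  have h0 := lap_nonneg_at_max hg hgmax
  have := heq x
  have : g y ≤ g x := hxS
  linarith

lemma step_vanish {n : ℕ} {g : Euc n → ℝ} (hg : ContDiff ℝ 2 g)
    (heq : ∀ y, lap n g y + g y = 0)
    (hdec : Filter.Tendsto g (Filter.cocompact (Euc n)) (nhds 0)) :
    ∀ y, g y = 0 := by
  intro y
  have h1 := no_pos hg heq hdec y
  have h2 : ∀ z, (fun w => -g w) z ≤ 0 := by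
    refine no_pos (hg.neg) (fun z => ?_) (by simpa using hdec.neg)
    rw [lap_neg_fun]
    have := heq z
    linarith
  have := h2 y
  simp at this
  linarith

lemma lapPow_zero {n : ℕ} (f : Euc n → ℝ) : lapPow n 1 0 f = f := rfl

lemma lapPow_succ {n m : ℕ} (f : Euc n → ℝ) :
    lapPow n 1 (m+1) f = fun x => lap n (lapPow n 1 m f) x + lapPow n 1 m f x := by
  rw [lapPow, Function.iterate_succ_apply']
  funext x
  show lap n (lapPow n 1 m f) x + 1 * lapPow n 1 m f x = _
  rw [one_mul]

lemma iter_all {n k : ℕ} {f : Euc n → ℝ} (hf : ContDiff ℝ (2*k : ℕ) f) :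
    ∀ j, j ≤ k → ContDiff ℝ ((2*(k-j) : ℕ)) (lapPow n 1 j f) ∧
      ∀ l, l ≤ 2*(k-j) → ∀ y, ‖iteratedFDeriv ℝ l (lapPow n 1 j f) y‖ ≤
        ((n:ℝ)+1)^j * ∑ m ∈ Finset.range (l+2*j+1), ‖iteratedFDeriv ℝ m f y‖ := by
  intro j
  induction j with
  | zero =>
    intro _
    refine ⟨by simpa [lapPow_zero] using hf, fun l hl y => ?_⟩
    rw [lapPow_zero]
    have h1 : ‖iteratedFDeriv ℝ l f y‖ ≤
        ∑ m ∈ Finset.range (l+2*0+1), ‖iteratedFDeriv ℝ m f y‖ :=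
      Finset.single_le_sum (f := fun m => ‖iteratedFDeriv ℝ m f y‖)
        (fun i _ => norm_nonneg _) (by simp)
    simpa using h1
  | succ j ih =>
    intro hjk
    obtain ⟨ihc, ihb⟩ := ih (by omega)
    set g := lapPow n 1 j f with hgdef
    have hm : 2*(k-j) = 2*(k-(j+1)) + 2 := by omega
    rw [hm] at ihc
    have hgc : ContDiff ℝ ((2*(k-(j+1)) : ℕ)) g := ihc.of_le (by exact_mod_cast Nat.le_add_right _ 2)
    have hlapc : ContDiff ℝ ((2*(k-(j+1)) : ℕ)) (lap n g) := lap_contDiff ihc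
    constructor
    · rw [lapPow_succ]
      exact hlapc.add hgc
    · intro l hl y
      rw [lapPow_succ]
      have hsum : iteratedFDeriv ℝ l (fun x => lap n g x + g x) y =
          iteratedFDeriv ℝ l (lap n g) y + iteratedFDeriv ℝ l g y :=
        iteratedFDeriv_add_apply' (hlapc.contDiffAt.of_le (by exact_mod_cast hl))
          (hgc.contDiffAt.of_le (by exact_mod_cast hl))
      rw [hsum]
      set S : ℝ := ∑ m ∈ Finset.range (l+2*(j+1)+1), ‖iteratedFDeriv ℝ m f y‖ with hSdef
      have hS0 : 0 ≤ S := Finset.sum_nonneg (fun i _ => norm_nonneg _)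
      have hb1 : ‖iteratedFDeriv ℝ l (lap n g) y‖ ≤ (n:ℝ) * ‖iteratedFDeriv ℝ (l+2) g y‖ :=
        lap_bound ihc hl y
      have hb2 : ‖iteratedFDeriv ℝ (l+2) g y‖ ≤ ((n:ℝ)+1)^j * S := by
        have := ihb (l+2) (by omega) y
        have hr : l+2+2*j+1 = l+2*(j+1)+1 := by omega
        rwa [hr] at this
      have hb3 : ‖iteratedFDeriv ℝ l g y‖ ≤ ((n:ℝ)+1)^j * S := by
        have h1 := ihb l (by omega) y
        refine le_trans h1 (mul_le_mul_of_nonneg_left ?_ (by positivity))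
        refine Finset.sum_le_sum_of_subset_of_nonneg ?_ (fun i _ _ => norm_nonneg _)
        exact Finset.range_subset_range.mpr (by omega)
      have hn0 : (0:ℝ) ≤ (n:ℝ) := Nat.cast_nonneg n
      have hp0 : (0:ℝ) ≤ ((n:ℝ)+1)^j := by positivity
      calc ‖iteratedFDeriv ℝ l (lap n g) y + iteratedFDeriv ℝ l g y‖
          ≤ ‖iteratedFDeriv ℝ l (lap n g) y‖ + ‖iteratedFDeriv ℝ l g y‖ := norm_add_le _ _
        _ ≤ (n:ℝ) * (((n:ℝ)+1)^j * S) + ((n:ℝ)+1)^j * S := by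
            refine add_le_add (le_trans hb1 ?_) hb3
            exact mul_le_mul_of_nonneg_left hb2 hn0
        _ = ((n:ℝ)+1)^(j+1) * S := by ring


/-- Liouville-type vanishing for globally defined solutions of
`(Δ+1)^k f = 0` with fast decay of all derivatives up to order `2k`. -/
theorem statement15 (n k : ℕ) (hk : 1 ≤ k) (hn : 2 * k < n)
    (f : Euc n → ℝ) (hf : ContDiff ℝ (2 * k : ℕ) f)
    (heq : ∀ y : Euc n, lapPow n 1 k f y = 0)
    (hdecay : ∀ p : ℝ, 1 ≤ p → ∃ C > 0, ∀ l ≤ 2 * k, ∀ y : Euc n,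
      ‖iteratedFDeriv ℝ l f y‖ ≤ C * (1 + ‖y‖) ^ (-p)) :
    ∀ y : Euc n, f y = 0 := by
  have hIA := iter_all (n := n) (k := k) (f := f) hf
  obtain ⟨C, hC, hCb⟩ := hdecay 1 le_rfl
  have hdec : ∀ j, j ≤ k →
      Filter.Tendsto (lapPow n 1 j f) (Filter.cocompact (Euc n)) (nhds 0) := by
    intro j hj
    have hb := (hIA j hj).2 0 (Nat.zero_le _)
    have key : ∀ y, ‖lapPow n 1 j f y‖ ≤
        ((n:ℝ)+1)^j * ((2*(j:ℝ)+1) * C) * (1+‖y‖)⁻¹ := by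
      intro y
      have h0 : ‖lapPow n 1 j f y‖ = ‖iteratedFDeriv ℝ 0 (lapPow n 1 j f) y‖ :=
        (norm_iteratedFDeriv_zero).symm
      rw [h0]
      refine le_trans (hb y) ?_
      have hterm : ∀ m ∈ Finset.range (0+2*j+1), ‖iteratedFDeriv ℝ m f y‖ ≤ C * (1+‖y‖)⁻¹ := by
        intro m hm
        have hm' : m ≤ 2*k := by
          simp only [Finset.mem_range] at hm; omega
        have h2 := hCb m hm' y
        rwa [Real.rpow_neg_one] at h2
      have hsb : ∑ m ∈ Finset.range (0+2*j+1), ‖iteratedFDeriv ℝ m f y‖ ≤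
          (2*(j:ℝ)+1) * (C * (1+‖y‖)⁻¹) := by
        refine le_trans (Finset.sum_le_sum hterm) ?_
        rw [Finset.sum_const, Finset.card_range, nsmul_eq_mul]
        have : ((0+2*j+1 : ℕ) : ℝ) = 2*(j:ℝ)+1 := by push_cast; ring
        rw [this]
      calc ((n:ℝ)+1)^j * ∑ m ∈ Finset.range (0+2*j+1), ‖iteratedFDeriv ℝ m f y‖
          ≤ ((n:ℝ)+1)^j * ((2*(j:ℝ)+1) * (C * (1+‖y‖)⁻¹)) :=
            mul_le_mul_of_nonneg_left hsb (by positivity)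
        _ = ((n:ℝ)+1)^j * ((2*(j:ℝ)+1)*C) * (1+‖y‖)⁻¹ := by ring
    have h1 : Filter.Tendsto (fun y : Euc n => 1 + ‖y‖) (Filter.cocompact (Euc n))
        Filter.atTop := Filter.tendsto_atTop_add_const_left _ 1 tendsto_norm_cocompact_atTop
    have h2 := h1.inv_tendsto_atTop
    have h3 := h2.const_mul (((n:ℝ)+1)^j * ((2*(j:ℝ)+1)*C))
    refine squeeze_zero_norm key ?_
    simpa using h3
  have down : ∀ j, j ≤ k → ∀ y, lapPow n 1 (k-j) f y = 0 := by
    intro j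
    induction j with
    | zero => intro _; simpa using heq
    | succ j ih =>
      intro hjk
      have ihv := ih (by omega)
      have hkj : k - j = (k-(j+1)) + 1 := by omega
      have hstep : ∀ x, lap n (lapPow n 1 (k-(j+1)) f) x + lapPow n 1 (k-(j+1)) f x = 0 := by
        intro x
        have h := ihv x
        rwa [hkj, lapPow_succ] at h
      have h1 := (hIA (k-(j+1)) (by omega)).1
      have he : 2*(k-(k-(j+1))) = 2*(j+1) := by omega
      rw [he] at h1
      exact step_vanish (h1.of_le (by exact_mod_cast (by omega : 2 ≤ 2*(j+1))))
        hstep (hdec _ (by omega))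
  intro y
  have h := down k le_rfl y
  rwa [Nat.sub_self, lapPow_zero] at h
end
end
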